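/- Let R be a ring satisfying (SR_r), let q be a two-sided ideal of R, and let n ≥ r. Suppose (c_1, ..., c_n) ∈ R^n is a unimodular vector with c_n ∈ q. Then there exist b_1, ..., b_{n-1} ∈ q such that (c_1 + b_1 c_n, ..., c_{n-1} + b_{n-1} c_n) ∈ R^{n-1} is unimodular. -/

import Mathlib

open Matrix

/-- A vector `v ∈ Rⁿ` is *unimodular* if some homomorphism of right `R`-modules
`φ : Rⁿ → R` sends it to `1`.  Right `R`-modules are encoded as modules over `Rᵐᵒᵖ`. -/
def IsUnimodular {n : ℕ} (R : Type) [Ring R] (v : Fin n → R) : Prop :=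
  ∃ φ : (Fin n → R) →ₗ[Rᵐᵒᵖ] R, φ v = 1

/-- Bass's stable rank condition `(SR_r)`: for all `n ≥ r` and every unimodular
`(c₁, …, cₙ) ∈ Rⁿ` there are `b₁, …, b_{n-1} ∈ R` such that
`(c₁ + b₁ cₙ, …, c_{n-1} + b_{n-1} cₙ)` is unimodular. -/
def SatisfiesSR (R : Type) [Ring R] (r : ℕ) : Prop :=
  ∀ n : ℕ, r ≤ n + 1 → ∀ c : Fin (n + 1) → R, IsUnimodular R c →
    ∃ b : Fin n → R,
      IsUnimodular R (fun i : Fin n => c i.castSucc + b i * c (Fin.last n))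

/-- An elementary matrix differs from the identity at exactly one off-diagonal entry. -/
def IsElementaryMatrix {R : Type} [Ring R] {n : ℕ} (A : Matrix (Fin n) (Fin n) R) : Prop :=
  ∃ i j : Fin n, i ≠ j ∧ ∃ x : R, A = 1 + Matrix.single i j x

/-- `EL_n(R)`: the subgroup of `GL_n(R)` generated by the elementary matrices. -/
def ElementarySubgroup (R : Type) [Ring R] (n : ℕ) : Subgroup ((Matrix (Fin n) (Fin n) R)ˣ) :=
  Subgroup.closure {M : (Matrix (Fin n) (Fin n) R)ˣ | IsElementaryMatrix M.val}

open MulOpposite in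
lemma isUnimodular_iff {n : ℕ} (R : Type) [Ring R] (v : Fin n → R) :
    IsUnimodular R v ↔ ∃ a : Fin n → R, ∑ i, a i * v i = 1 := by
  constructor
  · rintro ⟨φ, hφ⟩
    refine ⟨fun i => φ (Pi.single i 1), ?_⟩
    have hv : v = ∑ i : Fin n, (op (v i)) • Pi.single i (1 : R) := by
      funext j
      simp [Finset.sum_apply, Pi.single_apply, op_smul_eq_mul]
    have : φ v = ∑ i, φ (Pi.single i 1) * v i := by
      conv_lhs => rw [hv]
      rw [map_sum]
      simp [op_smul_eq_mul]
    rw [← this, hφ]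
  · rintro ⟨a, ha⟩
    refine ⟨⟨⟨fun w => ∑ i, a i * w i, fun w₁ w₂ => by
      simp [mul_add, Finset.sum_add_distrib]⟩, fun x w => by
      simp [op_smul_eq_mul, Finset.sum_mul, mul_assoc]⟩, ha⟩



/-- Relative stable range condition: if `R` satisfies `(SR_r)`, `q` is a two-sided ideal,
`n ≥ r` (the vector has length `n + 1 ≥ r`), and `(c₁, …, cₙ)` is unimodular with
`cₙ ∈ q`, then one can choose the shortening coefficients `b₁, …, b_{n-1}` inside `q`. -/
theorem satisfiesSR_relative_ideal (R : Type) [Ring R] (r n : ℕ) (hSR : SatisfiesSR R r)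
    (q : TwoSidedIdeal R) (hn : r ≤ n + 1) (c : Fin (n + 1) → R)
    (hc : IsUnimodular R c) (hlast : c (Fin.last n) ∈ q) :
    ∃ b : Fin n → R, (∀ i, b i ∈ q) ∧
      IsUnimodular R (fun i : Fin n => c i.castSucc + b i * c (Fin.last n)) := by
  obtain ⟨a, ha⟩ := (isUnimodular_iff R c).mp hc
  set cN := c (Fin.last n) with hcN
  set aN := a (Fin.last n) with haN
  -- the modified row with last entry `cN * aN * cN`
  set c' : Fin (n + 1) → R :=
    fun i => Fin.lastCases (cN * aN * cN) (fun j => c j.castSucc) i with hc'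
  have hc'cast : ∀ j : Fin n, c' j.castSucc = c j.castSucc := fun j => by
    simp [hc']
  have hc'last : c' (Fin.last n) = cN * aN * cN := by simp [hc']
  have hS : (∑ j : Fin n, a j.castSucc * c j.castSucc) + aN * cN = 1 := by
    have := ha
    rw [Fin.sum_univ_castSucc] at this
    exact this
  have hc'uni : IsUnimodular R c' := by
    rw [isUnimodular_iff]
    refine ⟨fun i => Fin.lastCases aN
      (fun j => a j.castSucc + aN * cN * a j.castSucc) i, ?_⟩
    rw [Fin.sum_univ_castSucc]
    simp only [Fin.lastCases_castSucc, Fin.lastCases_last, hc'cast, hc'last]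
    have expand : ∑ j : Fin n, (a j.castSucc + aN * cN * a j.castSucc) * c j.castSucc
        = (∑ j : Fin n, a j.castSucc * c j.castSucc)
          + aN * cN * (∑ j : Fin n, a j.castSucc * c j.castSucc) := by
      rw [Finset.mul_sum, ← Finset.sum_add_distrib]
      congr 1; funext j; noncomm_ring
    rw [expand]
    set S := ∑ j : Fin n, a j.castSucc * c j.castSucc
    have : aN * (cN * aN * cN) = aN * cN * (aN * cN) := by noncomm_ring
    rw [this]
    calc S + aN * cN * S + aN * cN * (aN * cN)
        = S + aN * cN * (S + aN * cN) := by noncomm_ring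
      _ = 1 := by rw [hS, mul_one, hS]
  obtain ⟨b, hb⟩ := hSR n hn c' hc'uni
  refine ⟨fun i => b i * cN * aN, fun i => q.mul_mem_right _ _ (q.mul_mem_left _ _ hlast), ?_⟩
  have : (fun i : Fin n => c i.castSucc + (b i * cN * aN) * cN)
      = fun i : Fin n => c' i.castSucc + b i * c' (Fin.last n) := by
    funext i; rw [hc'cast, hc'last]; noncomm_ring
  rw [this]
  exact hb
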